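/- If (r_0, …, r_h) is a δ-sequence with conductor μ = (Σ_{k=1}^h (e_k − 1) r_k) − r_0 + 1, then μ ≥ 2(2^h − 1). In particular h ≤ log₂(μ/2 + 1). -/

import Mathlib

/-- A sequence `r 0, …, r h` of positive integers, together with the chain of gcds
`d 1 = r 0`, `d (k+1) = gcd (d k) (r k)`, is *free* if `d (h+1) = 1` (so the `r k` are
coprime) and `e_k · r_k ∈ ⟨r_0, …, r_{k−1}⟩` for all `1 ≤ k ≤ h`, where
`e k = d k / d (k+1)`. -/
def IsFreeSeq (h : ℕ) (r d : ℕ → ℕ) : Prop :=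
  (∀ k ≤ h, 0 < r k) ∧
  d 1 = r 0 ∧
  (∀ k, 1 ≤ k → k ≤ h → d (k + 1) = Nat.gcd (d k) (r k)) ∧
  d (h + 1) = 1 ∧
  ∀ k, 1 ≤ k → k ≤ h →
    (d k / d (k + 1)) * r k ∈ AddSubmonoid.closure (r '' Set.Iio k)

/-- A free sequence `(r_0, …, r_h)` (with gcd chain `d`) is a *δ-sequence* if moreover
`r_k d_k > r_{k+1} d_{k+1}` for `1 ≤ k ≤ h−1` and
`r_0 > r_1 > d_2 > d_3 > ⋯ > d_{h+1} = 1`. -/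
def IsDeltaSeq (h : ℕ) (r d : ℕ → ℕ) : Prop :=
  IsFreeSeq h r d ∧ 1 ≤ h ∧
  (∀ k, 1 ≤ k → k + 1 ≤ h → r k * d k > r (k + 1) * d (k + 1)) ∧
  r 0 > r 1 ∧ r 1 > d 2 ∧
  ∀ k, 2 ≤ k → k ≤ h → d (k + 1) < d k

lemma aux_geom : ∀ n : ℕ, 1 ≤ n → (∑ k ∈ Finset.Icc 2 n, (2:ℤ)^(n - k)) = 2^(n-1) - 1 := by
  intro n
  induction n with
  | zero => omega
  | succ m ih =>
    intro _
    rcases Nat.eq_zero_or_pos m with h0 | hm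
    · subst h0; simp
    · rw [Finset.sum_Icc_succ_top (by omega : 2 ≤ m + 1)]
      have hcongr : ∀ k ∈ Finset.Icc 2 m, (2:ℤ)^(m + 1 - k) = 2 * 2^(m - k) := by
        intro k hk
        simp only [Finset.mem_Icc] at hk
        rw [show m + 1 - k = (m - k) + 1 by omega, pow_succ]; ring
      rw [Finset.sum_congr rfl hcongr, ← Finset.mul_sum, ih hm]
      rw [Nat.sub_self, pow_zero, Nat.add_sub_cancel]
      have hp : (2:ℤ) ^ (m - 1) * 2 = 2 ^ m := by
        rw [← pow_succ, Nat.sub_add_cancel hm]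
      linarith

/-- If `g ∣ x`, `g < x`, `0 < g`, then `2 * g ≤ x`. -/
lemma aux_two_mul_le {g x : ℕ} (_hg : 0 < g) (hdvd : g ∣ x) (hlt : g < x) : 2 * g ≤ x := by
  obtain ⟨c, hc⟩ := hdvd
  have h1 : 1 < c := by
    apply Nat.lt_of_mul_lt_mul_left (a := g)
    rw [mul_one, ← hc]; exact hlt
  calc 2 * g = g * 2 := mul_comm 2 g
    _ ≤ g * c := Nat.mul_le_mul_left g h1
    _ = x := hc.symm

theorem delta_sequence_conductor_lower_bound (h : ℕ) (r d : ℕ → ℕ)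
    (hdelta : IsDeltaSeq h r d) (μ : ℕ)
    (hμ : (μ : ℤ)
      = (∑ k ∈ Finset.Icc 1 h, (((d k / d (k + 1) : ℕ) : ℤ) - 1) * (r k : ℤ))
        - (r 0 : ℤ) + 1) :
    2 * (2 ^ h - 1) ≤ μ ∧ (h : ℝ) ≤ Real.logb 2 ((μ : ℝ) / 2 + 1) := by
  obtain ⟨⟨hrpos, hd1, hgcd, hdend, hclos⟩, hh1, _hrd, hr01, hr12, hstrict⟩ := hdelta
  -- positivity of the d chain
  have dpos : ∀ k, 1 ≤ k → k ≤ h + 1 → 0 < d k := by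
    intro k
    induction k with
    | zero => omega
    | succ n ih =>
      intro _ hk
      rcases Nat.eq_zero_or_pos n with h0 | hn
      · subst h0; rw [hd1]; exact hrpos 0 (by omega)
      · rw [hgcd n hn (by omega)]
        exact Nat.gcd_pos_of_pos_right _ (hrpos n (by omega))
  have ddvd : ∀ k, 1 ≤ k → k ≤ h → d (k + 1) ∣ d k := by
    intro k h1 h2
    rw [hgcd k h1 h2]; exact Nat.gcd_dvd_left _ _
  have rdvd : ∀ k, 1 ≤ k → k ≤ h → d (k + 1) ∣ r k := by
    intro k h1 h2
    rw [hgcd k h1 h2]; exact Nat.gcd_dvd_right _ _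
  have dle : ∀ a b : ℕ, 1 ≤ a → a ≤ b → b ≤ h + 1 → d b ≤ d a := by
    intro a b ha hab
    induction b with
    | zero => omega
    | succ n ih =>
      intro hb
      rcases Nat.lt_or_ge a (n + 1) with hlt | hge
      · have han : a ≤ n := by omega
        have h1n : 1 ≤ n := by omega
        calc d (n + 1) ≤ d n := Nat.le_of_dvd (dpos n h1n (by omega)) (ddvd n h1n (by omega))
          _ ≤ d a := ih han (by omega)
      · have : a = n + 1 := by omega
        subst this; rfl
  -- r 1 ≥ 2 d 2
  have hd2pos : 0 < d 2 := dpos 2 (by omega) (by omega)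
  have r1ge : 2 * d 2 ≤ r 1 := aux_two_mul_le hd2pos (rdvd 1 le_rfl hh1) hr12
  -- d 1 ≥ 3 d 2
  have r0ge : 3 * d 2 ≤ d 1 := by
    obtain ⟨c, hc⟩ := ddvd 1 le_rfl hh1
    have hgt : 2 * d 2 < d 1 := by
      calc 2 * d 2 ≤ r 1 := r1ge
        _ < r 0 := hr01
        _ = d 1 := hd1.symm
    have h2c : 2 < c := by
      apply Nat.lt_of_mul_lt_mul_left (a := d 2)
      calc d 2 * 2 = 2 * d 2 := mul_comm _ _
        _ < d 1 := hgt
        _ = d 2 * c := hc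
    calc 3 * d 2 = d 2 * 3 := mul_comm _ _
      _ ≤ d 2 * c := Nat.mul_le_mul_left _ h2c
      _ = d 1 := hc.symm
  -- key: r k ≥ 2 d (k+1)
  have rkey : ∀ k, 1 ≤ k → k ≤ h → 2 * d (k + 1) ≤ r k := by
    intro k
    induction k using Nat.strong_induction_on with
    | _ k ih =>
      intro hk1 hkh
      rcases eq_or_lt_of_le hk1 with h1 | h2
      · rw [← h1]; exact r1ge
      · -- 2 ≤ k
        have hdvdr := rdvd k hk1 hkh
        have hdkpos : 0 < d k := dpos k hk1 (by omega)
        have hdk1pos : 0 < d (k + 1) := dpos (k + 1) (by omega) (by omega)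
        have hdk2 : d k ≤ d 2 := dle 2 k (by omega) h2 (by omega)
        have hne : d (k + 1) < r k := by
          rcases Nat.lt_or_ge (d (k + 1)) (r k) with hlt | hge
          · exact hlt
          have heq : r k = d (k + 1) := by
            have := Nat.le_of_dvd (hrpos k hkh) hdvdr
            omega
          exfalso
          have hmul : d k / d (k + 1) * r k = d k := by
            rw [heq]; exact Nat.div_mul_cancel (ddvd k hk1 hkh)
          have hmem := hclos k hk1 hkh
          rw [hmul] at hmem
          have hbound : ∀ x ∈ AddSubmonoid.closure (r '' Set.Iio k), x = 0 ∨ d k < x := by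
            intro x hx
            induction hx using AddSubmonoid.closure_induction with
            | mem y hy =>
              obtain ⟨j, hj, rfl⟩ := hy
              simp only [Set.mem_Iio] at hj
              right
              rcases Nat.eq_zero_or_pos j with hj0 | hj1
              · subst hj0
                have : d k < r 1 := by
                  calc d k ≤ d 2 := hdk2
                    _ < r 1 := hr12
                omega
              · have hj1' : 2 * d (j + 1) ≤ r j := by
                  rcases eq_or_lt_of_le (show 1 ≤ j from hj1) with hje | hjl
                  · rw [← hje]; exact r1ge
                  · exact ih j hj hj1 (by omega)
                have hdj : d k ≤ d (j + 1) := dle (j + 1) k (by omega) (by omega) (by omega)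
                have : 0 < d (j + 1) := dpos (j + 1) (by omega) (by omega)
                omega
            | zero => left; rfl
            | add x y hx hy px py =>
              rcases px with rfl | px <;> rcases py with rfl | py <;> simp <;> omega
          rcases hbound _ hmem with h0 | hlt2 <;> omega
        exact aux_two_mul_le hdk1pos hdvdr hne
  -- power lower bound on d
  have dpow : ∀ j, j ≤ h - 1 → 2 ^ j ≤ d (h + 1 - j) := by
    intro j
    induction j with
    | zero => intro _; simp [hdend]
    | succ n ihn =>
      intro hn
      have hk2 : 2 ≤ h - n := by omega
      have hkh : h - n ≤ h := by omega
      have hdk1pos : 0 < d (h - n + 1) := dpos _ (by omega) (by omega)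
      have hstep : 2 * d (h - n + 1) ≤ d (h - n) :=
        aux_two_mul_le hdk1pos (ddvd (h - n) (by omega) hkh) (hstrict (h - n) hk2 hkh)
      have hprev : 2 ^ n ≤ d (h + 1 - n) := ihn (by omega)
      have heq1 : h - n + 1 = h + 1 - n := by omega
      have heq2 : h + 1 - (n + 1) = h - n := by omega
      rw [heq2]
      calc 2 ^ (n + 1) = 2 * 2 ^ n := by ring
        _ ≤ 2 * d (h + 1 - n) := by omega
        _ = 2 * d (h - n + 1) := by rw [heq1]
        _ ≤ d (h - n) := hstep
  have hd2pow : 2 ^ (h - 1) ≤ d 2 := by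
    have := dpow (h - 1) le_rfl
    rwa [show h + 1 - (h - 1) = 2 by omega] at this
  -- per-term bounds
  have termbound : ∀ k ∈ Finset.Icc 2 h,
      ((d k : ℤ) + d (k + 1)) ≤ (((d k / d (k + 1) : ℕ) : ℤ) - 1) * (r k : ℤ) := by
    intro k hk
    simp only [Finset.mem_Icc] at hk
    obtain ⟨hk2, hkh⟩ := hk
    have hk1 : 1 ≤ k := by omega
    have hgpos : 0 < d (k + 1) := dpos (k + 1) (by omega) (by omega)
    obtain ⟨E, hEd⟩ := ddvd k hk1 hkh
    have hdiv : d k / d (k + 1) = E := by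
      rw [hEd]; exact Nat.mul_div_cancel_left E hgpos
    rw [hdiv]
    have hrk2 : 2 * d (k + 1) ≤ r k := rkey k hk1 hkh
    have hlt := hstrict k hk2 hkh
    have hE2 : 2 ≤ E := by
      have h1 : 1 < E := by
        apply Nat.lt_of_mul_lt_mul_left (a := d (k + 1))
        rw [mul_one, ← hEd]; exact hlt
      omega
    rcases eq_or_lt_of_le hE2 with hE2' | hE3
    · -- E = 2 : use r k ≥ 3 d (k+1) via coprimality
      have hE2'' : E = 2 := hE2'.symm
      subst hE2''
      have hcop : Nat.Coprime (d k / d (k + 1)) (r k / d (k + 1)) := by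
        have := Nat.coprime_div_gcd_div_gcd (m := d k) (n := r k)
          (by rw [← hgcd k hk1 hkh]; exact hgpos)
        rwa [← hgcd k hk1 hkh] at this
      obtain ⟨c, hc⟩ := rdvd k hk1 hkh
      have hrg : r k / d (k + 1) = c := by
        rw [hc]; exact Nat.mul_div_cancel_left c hgpos
      rw [hrg, hdiv] at hcop
      have hcodd : ¬ 2 ∣ c := by
        intro h2c
        have hd : 2 ∣ Nat.gcd 2 c := Nat.dvd_gcd dvd_rfl h2c
        rw [Nat.Coprime] at hcop
        omega
      have hc2 : 2 ≤ c := by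
        have hgc : d (k + 1) * 2 ≤ d (k + 1) * c := by
          calc d (k + 1) * 2 = 2 * d (k + 1) := mul_comm _ 2
            _ ≤ r k := hrk2
            _ = d (k + 1) * c := hc
        exact Nat.le_of_mul_le_mul_left hgc hgpos
      have hc3 : 3 ≤ c := by omega
      have h3g : 3 * d (k + 1) ≤ r k := by
        calc 3 * d (k + 1) = d (k + 1) * 3 := mul_comm 3 _
          _ ≤ d (k + 1) * c := Nat.mul_le_mul_left _ hc3
          _ = r k := hc.symm
      have hfin : d k + d (k + 1) ≤ r k := by
        have : d k = d (k + 1) * 2 := hEd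
        omega
      have hE1 : ((2 : ℕ) : ℤ) - 1 = 1 := by norm_num
      rw [hE1, one_mul]
      exact_mod_cast hfin
    · -- E ≥ 3
      have hE3' : (3:ℤ) ≤ (E : ℤ) := by exact_mod_cast hE3
      have hgnn : (0:ℤ) ≤ (d (k + 1) : ℤ) := by positivity
      have h1 : (0:ℤ) ≤ (E : ℤ) - 1 := by linarith
      have h2 : (0:ℤ) ≤ (r k : ℤ) - 2 * (d (k + 1) : ℤ) := by
        have : (2 * d (k + 1) : ℤ) ≤ (r k : ℤ) := by exact_mod_cast hrk2
        linarith
      have hEd' : (d k : ℤ) = (d (k + 1) : ℤ) * (E : ℤ) := by exact_mod_cast hEd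
      have h3 : 3 * (d (k + 1) : ℤ) ≤ (E : ℤ) * (d (k + 1) : ℤ) :=
        mul_le_mul_of_nonneg_right hE3' hgnn
      nlinarith [mul_nonneg h1 h2]
  -- k = 1 term
  have term1 : 2 * (d 1 : ℤ) - 2 * (d 2 : ℤ) ≤ (((d 1 / d 2 : ℕ) : ℤ) - 1) * (r 1 : ℤ) := by
    obtain ⟨E, hEd⟩ := ddvd 1 le_rfl hh1
    have hdiv : d 1 / d 2 = E := by
      rw [hEd]; exact Nat.mul_div_cancel_left E hd2pos
    rw [hdiv]
    have hE3 : 3 ≤ E := by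
      have hcalc : d 2 * 3 ≤ d 2 * E := by
        calc d 2 * 3 = 3 * d 2 := mul_comm _ 3
          _ ≤ d 1 := r0ge
          _ = d 2 * E := hEd
      exact Nat.le_of_mul_le_mul_left hcalc hd2pos
    have hE3' : (3:ℤ) ≤ (E : ℤ) := by exact_mod_cast hE3
    have h1 : (0:ℤ) ≤ (E : ℤ) - 1 := by linarith
    have h2 : (0:ℤ) ≤ (r 1 : ℤ) - 2 * (d 2 : ℤ) := by
      have : (2 * d 2 : ℤ) ≤ (r 1 : ℤ) := by exact_mod_cast r1ge
      linarith
    have hEd' : (d 1 : ℤ) = (d 2 : ℤ) * (E : ℤ) := by exact_mod_cast hEd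
    nlinarith [mul_nonneg h1 h2]
  -- assemble
  have hsplit : Finset.Icc 1 h = insert 1 (Finset.Icc 2 h) := by
    ext x; simp only [Finset.mem_Icc, Finset.mem_insert]; omega
  have hnotmem : (1 : ℕ) ∉ Finset.Icc 2 h := by simp
  have hsum : (μ : ℤ) = (((d 1 / d 2 : ℕ) : ℤ) - 1) * (r 1 : ℤ)
      + (∑ k ∈ Finset.Icc 2 h, (((d k / d (k + 1) : ℕ) : ℤ) - 1) * (r k : ℤ))
      - (d 1 : ℤ) + 1 := by
    rw [hμ, hsplit, Finset.sum_insert hnotmem, hd1]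
  have hsumlb : (∑ k ∈ Finset.Icc 2 h, ((d k : ℤ) + d (k + 1)))
      ≤ ∑ k ∈ Finset.Icc 2 h, (((d k / d (k + 1) : ℕ) : ℤ) - 1) * (r k : ℤ) :=
    Finset.sum_le_sum termbound
  have hgeom : (∑ k ∈ Finset.Icc 2 h, (3 * (2:ℤ) ^ (h - k)))
      ≤ ∑ k ∈ Finset.Icc 2 h, ((d k : ℤ) + d (k + 1)) := by
    apply Finset.sum_le_sum
    intro k hk
    simp only [Finset.mem_Icc] at hk
    have h1 : (2:ℕ) ^ (h + 1 - k) ≤ d k := by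
      have := dpow (h + 1 - k) (by omega)
      rwa [show h + 1 - (h + 1 - k) = k by omega] at this
    have h2 : (2:ℕ) ^ (h - k) ≤ d (k + 1) := by
      have := dpow (h - k) (by omega)
      rwa [show h + 1 - (h - k) = k + 1 by omega] at this
    have h3 : (2:ℕ) ^ (h + 1 - k) = 2 * 2 ^ (h - k) := by
      rw [show h + 1 - k = (h - k) + 1 by omega, pow_succ]; ring
    have h1' : (2:ℤ) * 2 ^ (h - k) ≤ d k := by
      rw [h3] at h1; exact_mod_cast h1
    have h2' : (2:ℤ) ^ (h - k) ≤ d (k + 1) := by exact_mod_cast h2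
    linarith
  have hgeomval : (∑ k ∈ Finset.Icc 2 h, (3 * (2:ℤ) ^ (h - k)))
      = 3 * (2 ^ (h - 1) - 1) := by
    rw [← Finset.mul_sum, aux_geom h hh1]
  have hd2pow' : (2:ℤ) ^ (h - 1) ≤ d 2 := by exact_mod_cast hd2pow
  have hr0ge' : 3 * (d 2 : ℤ) ≤ d 1 := by exact_mod_cast r0ge
  have hpow : (2:ℤ) ^ (h + 1) = 4 * 2 ^ (h - 1) := by
    rw [show h + 1 = (h - 1) + 2 by omega, pow_add]; ring
  have hmain : (2:ℤ) ^ (h + 1) - 2 ≤ (μ : ℤ) := by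
    linarith [term1, hsumlb, hgeom, hgeomval.ge, hgeomval.le, hd2pow', hr0ge',
      hsum.le, hsum.ge, hpow]
  constructor
  · have h1 : (1:ℕ) ≤ 2 ^ h := Nat.one_le_two_pow
    zify [h1]
    have h2 : (2:ℤ) ^ (h + 1) = 2 * 2 ^ h := by rw [pow_succ]; ring
    linarith
  · have hm' : (2:ℝ) ^ (h + 1) - 2 ≤ (μ : ℝ) := by exact_mod_cast hmain
    have h2 : (2:ℝ) ^ (h + 1) = 2 * 2 ^ h := by rw [pow_succ]; ring
    have hx : (2:ℝ) ^ h ≤ (μ : ℝ) / 2 + 1 := by linarith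
    have hlog := Real.logb_le_logb_of_le (by norm_num : (1:ℝ) < 2)
      (by positivity : (0:ℝ) < (2:ℝ) ^ h) hx
    rw [Real.logb_pow, Real.logb_self_eq_one (by norm_num : (1:ℝ) < 2)] at hlog
    simpa using hlog
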